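/- Let f: T → R be Lipschitz with constant Lip(f) on the unit torus T = R/Z with distance d_T(x,y) = |x-y|(1-|x-y|) (representatives in [0,1)). Define L^T f(u) = c ∫_{T∖{0}} (f(u+v) - f(u)) / d_T(0,v) dv for a constant c > 0. Then the integral converges absolutely for every u, and u ↦ L^T f(u) satisfies the modulus-of-continuity bound |L^T f(y) - L^T f(x)| ≤ 4 c Lip(f) d_T(x,y) (2 + log(1/d_T(x,y))) for all x ≠ y; in particular L^T f is continuous on T. -/

import Mathlib

open MeasureTheory Set

private lemma fract_prod_le_abs (t : ℝ) :
    Int.fract t * (1 - Int.fract t) ≤ |t| := by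
  have h0 := Int.fract_nonneg t
  have h1 := (Int.fract_lt_one t).le
  have hfr : Int.fract t = t - ⌊t⌋ := rfl
  rcases le_or_gt 0 t with ht | ht
  · have h2 : (0:ℝ) ≤ (⌊t⌋ : ℝ) := by exact_mod_cast Int.le_floor.mpr (by exact_mod_cast ht)
    have hf : Int.fract t ≤ t := by rw [hfr]; linarith
    calc Int.fract t * (1 - Int.fract t) ≤ Int.fract t := by nlinarith
    _ ≤ |t| := hf.trans (le_abs_self t)
  · have h2 : (⌊t⌋ : ℝ) ≤ -1 := by
      have : ⌊t⌋ ≤ -1 := by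
        have := Int.floor_lt.mpr (show t < ((0:ℤ):ℝ) by exact_mod_cast ht)
        omega
      exact_mod_cast this
    have hf : 1 - Int.fract t ≤ -t := by rw [hfr]; linarith
    calc Int.fract t * (1 - Int.fract t) ≤ 1 - Int.fract t := by nlinarith
    _ ≤ -t := hf
    _ ≤ |t| := neg_le_abs t

private lemma min_one_add (p q : ℝ) (hp : 0 ≤ p) (hq : 0 ≤ q) :
    min 1 (p + q) ≤ min 1 p + min 1 q := by
  rcases le_total (p + q) 1 with h | h
  · rw [min_eq_right h, min_eq_right (by linarith), min_eq_right (by linarith)]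
  · calc min 1 (p + q) ≤ 1 := min_le_left _ _
    _ ≤ min 1 p + min 1 q := by
        rcases le_total p 1 with hp1 | hp1
        · rcases le_total q 1 with hq1 | hq1
          · rw [min_eq_right hp1, min_eq_right hq1]; linarith
          · rw [min_eq_left hq1]; linarith [le_min (zero_le_one (α := ℝ)) hp]
        · rw [min_eq_left hp1]; linarith [le_min (zero_le_one (α := ℝ)) hq]

private lemma integrableOn_of_bounded' {f : ℝ → ℝ} {s : Set ℝ} (hs : MeasurableSet s)
    (hvol : volume s < ⊤) (hm : Measurable f) (C : ℝ)
    (hb : ∀ v ∈ s, |f v| ≤ C) : IntegrableOn f s := by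
  apply Integrable.mono' (g := fun _ => C) (integrableOn_const hvol.ne)
    hm.aestronglyMeasurable.restrict
  filter_upwards [ae_restrict_mem hs] with v hv
  simpa using hb v hv

private lemma integral_min_one_div (a : ℝ) (ha : 0 < a) (ha1 : a < 1) :
    ∫ v in Ioo (0:ℝ) 1, min 1 (a / v) = a - a * Real.log a := by
  have hmeas : Measurable fun v : ℝ => min 1 (a / v) :=
    measurable_const.min (measurable_const.div measurable_id)
  have h1 : ∫ v in Ioc (0:ℝ) a, min 1 (a / v) = a := by
    have heq : EqOn (fun v : ℝ => min 1 (a / v)) (fun _ => (1:ℝ)) (Ioc 0 a) := by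
      intro v hv
      have : (1:ℝ) ≤ a / v := (le_div_iff₀ hv.1).mpr (by linarith [hv.2])
      simp [min_eq_left this]
    rw [setIntegral_congr_fun measurableSet_Ioc heq]
    simp [Real.volume_Ioc, ha.le]
  have h2 : ∫ v in Ioc a 1, min 1 (a / v) = -(a * Real.log a) := by
    have heq : EqOn (fun v : ℝ => min 1 (a / v)) (fun v => a * v⁻¹) (Ioc a 1) := by
      intro v hv
      have hv0 : 0 < v := ha.trans hv.1
      have : a / v ≤ 1 := (div_le_one hv0).mpr hv.1.le
      simp only []
      rw [min_eq_right this, div_eq_mul_inv]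
    rw [setIntegral_congr_fun measurableSet_Ioc heq,
      ← intervalIntegral.integral_of_le ha1.le, intervalIntegral.integral_const_mul,
      integral_inv_of_pos ha one_pos, Real.log_div one_ne_zero (ne_of_gt ha)]
    simp [mul_sub]
  have hint1 : IntegrableOn (fun v : ℝ => min 1 (a / v)) (Ioc 0 a) := by
    apply integrableOn_of_bounded' measurableSet_Ioc measure_Ioc_lt_top hmeas 1
    intro v hv
    have h : 0 ≤ a / v := div_nonneg ha.le hv.1.le
    rw [abs_of_nonneg (le_min zero_le_one h)]
    exact min_le_left _ _
  have hint2 : IntegrableOn (fun v : ℝ => min 1 (a / v)) (Ioc a 1) := by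
    apply integrableOn_of_bounded' measurableSet_Ioc measure_Ioc_lt_top hmeas 1
    intro v hv
    have h : 0 ≤ a / v := div_nonneg ha.le (ha.trans hv.1).le
    rw [abs_of_nonneg (le_min zero_le_one h)]
    exact min_le_left _ _
  have hu : Ioc (0:ℝ) a ∪ Ioc a 1 = Ioc 0 1 := Ioc_union_Ioc_eq_Ioc ha.le ha1.le
  have hd : Disjoint (Ioc (0:ℝ) a) (Ioc a 1) := Ioc_disjoint_Ioc_of_le le_rfl
  rw [← integral_Ioc_eq_integral_Ioo, ← hu,
    setIntegral_union hd measurableSet_Ioc hint1 hint2, h1, h2]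
  ring

/-- For `f` Lipschitz on the unit torus (represented by a 1-periodic function on `ℝ` with
`|f x - f y| ≤ K d_T(x,y)`, `d_T(x,y) = fract(x-y)(1-fract(x-y))`), the generator
`L^T f(u) = c ∫_0^1 (f(u+v)-f(u))/(v(1-v)) dv` is well defined (the integral converges
absolutely), satisfies `|L^T f(y) - L^T f(x)| ≤ 4cK d_T(x,y)(2 + log(1/d_T(x,y)))`,
and is continuous. -/
theorem stmt_8 (c K : ℝ) (hc : 0 < c) (hK : 0 ≤ K) (f : ℝ → ℝ)
    (hper : Function.Periodic f 1)
    (hlip : ∀ x y : ℝ, |f x - f y| ≤ K * (Int.fract (x - y) * (1 - Int.fract (x - y)))) :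
    (∀ u : ℝ, IntegrableOn (fun v => (f (u + v) - f u) / (v * (1 - v))) (Set.Ioo 0 1)) ∧
    (∀ x y : ℝ, Int.fract (x - y) ≠ 0 →
      |(c * ∫ v in Set.Ioo (0:ℝ) 1, (f (y + v) - f y) / (v * (1 - v)))
          - (c * ∫ v in Set.Ioo (0:ℝ) 1, (f (x + v) - f x) / (v * (1 - v)))|
        ≤ 4 * c * K * (Int.fract (x - y) * (1 - Int.fract (x - y)))
            * (2 + Real.log (1 / (Int.fract (x - y) * (1 - Int.fract (x - y)))))) ∧
    Continuous (fun u => c * ∫ v in Set.Ioo (0:ℝ) 1, (f (u + v) - f u) / (v * (1 - v))) := by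
  have hlipR : ∀ x y : ℝ, |f x - f y| ≤ K * |x - y| := fun x y =>
    (hlip x y).trans (mul_le_mul_of_nonneg_left (fract_prod_le_abs _) hK)
  have hfc : Continuous f := by
    have hL : LipschitzWith (Real.toNNReal K) f := by
      apply LipschitzWith.of_dist_le_mul
      intro x y
      rw [Real.dist_eq, Real.dist_eq, Real.coe_toNNReal K hK]
      exact hlipR x y
    exact hL.continuous
  have hbound : ∀ u : ℝ, ∀ v ∈ Ioo (0:ℝ) 1,
      |(f (u + v) - f u) / (v * (1 - v))| ≤ K := by
    intro u v hv
    have hv0 : 0 < v := hv.1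
    have hv1 : v < 1 := hv.2
    have hden : 0 < v * (1 - v) := by nlinarith
    have hnum : |f (u + v) - f u| ≤ K * (v * (1 - v)) := by
      have h := hlip (u + v) u
      rwa [add_sub_cancel_left, Int.fract_eq_self.mpr ⟨hv0.le, hv1⟩] at h
    rw [abs_div, abs_of_pos hden, div_le_iff₀ hden]
    exact hnum
  have hmeas : ∀ u : ℝ, Measurable fun v : ℝ => (f (u + v) - f u) / (v * (1 - v)) := by
    intro u
    exact (((hfc.comp (continuous_const.add continuous_id)).sub continuous_const).measurable).div
      (measurable_id.mul (measurable_const.sub measurable_id))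
  have hInt : ∀ u : ℝ, IntegrableOn (fun v => (f (u + v) - f u) / (v * (1 - v))) (Ioo 0 1) :=
    fun u => integrableOn_of_bounded' measurableSet_Ioo measure_Ioo_lt_top (hmeas u) K (hbound u)
  refine ⟨hInt, ?_, ?_⟩
  · intro x y hxy
    set t := Int.fract (x - y) with ht
    have ht0 : 0 < t := lt_of_le_of_ne (Int.fract_nonneg _) (Ne.symm hxy)
    have ht1 : t < 1 := Int.fract_lt_one _
    set a := t * (1 - t) with ha
    have ha0 : 0 < a := by rw [ha]; nlinarith
    have ha1 : a < 1 := by rw [ha]; nlinarith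
    -- pointwise difference bound
    have hdiff : ∀ v ∈ Ioo (0:ℝ) 1,
        |(f (y + v) - f y) / (v * (1 - v)) - (f (x + v) - f x) / (v * (1 - v))|
          ≤ 2 * K * min 1 (a / (v * (1 - v))) := by
      intro v hv
      have hv0 : 0 < v := hv.1
      have hv1 : v < 1 := hv.2
      have hden : 0 < v * (1 - v) := by nlinarith
      have hA : |f (x + v) - f (y + v)| ≤ K * a := by
        have h := hlip (x + v) (y + v)
        rwa [show x + v - (y + v) = x - y by ring, ← ht, ← ha] at h
      have hB : |f x - f y| ≤ K * a := by
        have h := hlip x y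
        rwa [← ht, ← ha] at h
      have hC : |f (y + v) - f y| ≤ K * (v * (1 - v)) := by
        have h := hlip (y + v) y
        rwa [add_sub_cancel_left, Int.fract_eq_self.mpr ⟨hv0.le, hv1⟩] at h
      have hD : |f (x + v) - f x| ≤ K * (v * (1 - v)) := by
        have h := hlip (x + v) x
        rwa [add_sub_cancel_left, Int.fract_eq_self.mpr ⟨hv0.le, hv1⟩] at h
      rw [div_sub_div_same, abs_div, abs_of_pos hden, div_le_iff₀ hden]
      rcases le_total a (v * (1 - v)) with hle | hle
      · have hmin : min 1 (a / (v * (1 - v))) = a / (v * (1 - v)) :=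
          min_eq_right ((div_le_one hden).mpr hle)
        rw [hmin]
        have : 2 * K * (a / (v * (1 - v))) * (v * (1 - v)) = 2 * (K * a) := by
          rw [mul_assoc, div_mul_cancel₀ _ hden.ne']; ring
        rw [this]
        calc |f (y + v) - f y - (f (x + v) - f x)|
            = |(f (x + v) - f (y + v)) - (f x - f y)| := by rw [← abs_neg]; ring_nf
          _ ≤ |f (x + v) - f (y + v)| + |f x - f y| := abs_sub _ _
          _ ≤ 2 * (K * a) := by linarith
      · have hmin : min 1 (a / (v * (1 - v))) = 1 :=
          min_eq_left ((one_le_div hden).mpr hle)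
        rw [hmin, mul_one]
        calc |f (y + v) - f y - (f (x + v) - f x)|
            ≤ |f (y + v) - f y| + |f (x + v) - f x| := abs_sub _ _
          _ ≤ 2 * K * (v * (1 - v)) := by linarith
    have hg_meas : Measurable fun v : ℝ => 2 * K * min 1 (a / (v * (1 - v))) :=
      measurable_const.mul (measurable_const.min
        (measurable_const.div (measurable_id.mul (measurable_const.sub measurable_id))))
    have hg_int : IntegrableOn (fun v : ℝ => 2 * K * min 1 (a / (v * (1 - v)))) (Ioo 0 1) := by
      apply integrableOn_of_bounded' measurableSet_Ioo measure_Ioo_lt_top hg_meas (2 * K)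
      intro v hv
      have hden : 0 < v * (1 - v) := by nlinarith [hv.1, hv.2]
      have h0 : 0 ≤ min 1 (a / (v * (1 - v))) :=
        le_min zero_le_one (div_nonneg ha0.le hden.le)
      rw [abs_mul, abs_of_nonneg (by linarith : (0:ℝ) ≤ 2 * K), abs_of_nonneg h0]
      nlinarith [min_le_left (1:ℝ) (a / (v * (1 - v)))]
    have key : |(∫ v in Ioo (0:ℝ) 1, (f (y + v) - f y) / (v * (1 - v)))
          - ∫ v in Ioo (0:ℝ) 1, (f (x + v) - f x) / (v * (1 - v))|
        ≤ ∫ v in Ioo (0:ℝ) 1, 2 * K * min 1 (a / (v * (1 - v))) := by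
      rw [← integral_sub (hInt y) (hInt x)]
      refine le_trans ?_ (setIntegral_mono_on (((hInt y).sub (hInt x)).abs) hg_int
        measurableSet_Ioo hdiff)
      simpa [Real.norm_eq_abs] using
        norm_integral_le_integral_norm (μ := volume.restrict (Ioo (0:ℝ) 1))
          (fun v => (f (y + v) - f y) / (v * (1 - v)) - (f (x + v) - f x) / (v * (1 - v)))
    -- bound the integral of the majorant
    have hint_left : IntegrableOn (fun v : ℝ => min 1 (a / v)) (Ioo 0 1) := by
      apply integrableOn_of_bounded' measurableSet_Ioo measure_Ioo_lt_top
        (measurable_const.min (measurable_const.div measurable_id)) 1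
      intro v hv
      show |min 1 (a / v)| ≤ 1
      rw [abs_of_nonneg (le_min zero_le_one (div_nonneg ha0.le hv.1.le))]
      exact min_le_left _ _
    have hint_right : IntegrableOn (fun v : ℝ => min 1 (a / (1 - v))) (Ioo 0 1) := by
      apply integrableOn_of_bounded' measurableSet_Ioo measure_Ioo_lt_top
        (measurable_const.min (measurable_const.div (measurable_const.sub measurable_id))) 1
      intro v hv
      show |min 1 (a / (1 - v))| ≤ 1
      rw [abs_of_nonneg (le_min zero_le_one (div_nonneg ha0.le (by linarith [hv.2])))]
      exact min_le_left _ _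
    have hint_m : IntegrableOn (fun v : ℝ => min 1 (a / (v * (1 - v)))) (Ioo 0 1) := by
      apply integrableOn_of_bounded' measurableSet_Ioo measure_Ioo_lt_top
        (measurable_const.min (measurable_const.div
          (measurable_id.mul (measurable_const.sub measurable_id)))) 1
      intro v hv
      show |min 1 (a / (v * (1 - v)))| ≤ 1
      have hden : 0 < v * (1 - v) := by nlinarith [hv.1, hv.2]
      rw [abs_of_nonneg (le_min zero_le_one (div_nonneg ha0.le hden.le))]
      exact min_le_left _ _
    have hsub : ∫ v in Ioo (0:ℝ) 1, min 1 (a / (1 - v)) = a - a * Real.log a := by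
      rw [← integral_Ioc_eq_integral_Ioo, ← intervalIntegral.integral_of_le zero_le_one,
        intervalIntegral.integral_comp_sub_left (fun x => min 1 (a / x)) 1]
      norm_num
      rw [intervalIntegral.integral_of_le zero_le_one, integral_Ioc_eq_integral_Ioo]
      exact integral_min_one_div a ha0 ha1
    have hIg : ∫ v in Ioo (0:ℝ) 1, 2 * K * min 1 (a / (v * (1 - v)))
        ≤ 2 * K * (2 * (a - a * Real.log a)) := by
      rw [integral_const_mul]
      apply mul_le_mul_of_nonneg_left ?_ (by linarith : (0:ℝ) ≤ 2 * K)
      have hmono : ∫ v in Ioo (0:ℝ) 1, min 1 (a / (v * (1 - v)))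
          ≤ ∫ v in Ioo (0:ℝ) 1, (min 1 (a / v) + min 1 (a / (1 - v))) := by
        apply setIntegral_mono_on hint_m (hint_left.add hint_right) measurableSet_Ioo
        intro v hv
        have hv0 : 0 < v := hv.1
        have hv1 : v < 1 := hv.2
        have heq : a / (v * (1 - v)) = a / v + a / (1 - v) := by
          have h1 : v ≠ 0 := ne_of_gt hv0
          have h2 : (1:ℝ) - v ≠ 0 := ne_of_gt (by linarith)
          field_simp
          ring
        rw [heq]
        exact min_one_add _ _ (div_nonneg ha0.le hv0.le) (div_nonneg ha0.le (by linarith))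
      have hsum : ∫ v in Ioo (0:ℝ) 1, (min 1 (a / v) + min 1 (a / (1 - v)))
          = (a - a * Real.log a) + (a - a * Real.log a) := by
        rw [integral_add hint_left hint_right, integral_min_one_div a ha0 ha1, hsub]
      rw [hsum] at hmono
      linarith
    have habs : |(c * ∫ v in Ioo (0:ℝ) 1, (f (y + v) - f y) / (v * (1 - v)))
          - c * ∫ v in Ioo (0:ℝ) 1, (f (x + v) - f x) / (v * (1 - v))|
        = c * |(∫ v in Ioo (0:ℝ) 1, (f (y + v) - f y) / (v * (1 - v)))
          - ∫ v in Ioo (0:ℝ) 1, (f (x + v) - f x) / (v * (1 - v))| := by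
      rw [← mul_sub, abs_mul, abs_of_pos hc]
    rw [habs]
    have hlog : Real.log (1 / a) = -Real.log a := by rw [one_div, Real.log_inv]
    rw [hlog]
    have h1 : c * |(∫ v in Ioo (0:ℝ) 1, (f (y + v) - f y) / (v * (1 - v)))
          - ∫ v in Ioo (0:ℝ) 1, (f (x + v) - f x) / (v * (1 - v))|
        ≤ c * (2 * K * (2 * (a - a * Real.log a))) :=
      mul_le_mul_of_nonneg_left (key.trans hIg) hc.le
    refine h1.trans ?_
    nlinarith [mul_nonneg (mul_nonneg hc.le hK) ha0.le]
  · have hcont : Continuous fun u => ∫ v in Ioo (0:ℝ) 1, (f (u + v) - f u) / (v * (1 - v)) := by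
      apply continuous_of_dominated (bound := fun _ => K)
      · exact fun u => (hmeas u).aestronglyMeasurable
      · intro u
        filter_upwards [ae_restrict_mem measurableSet_Ioo] with v hv
        rw [Real.norm_eq_abs]
        exact hbound u v hv
      · exact integrableOn_const measure_Ioo_lt_top.ne
      · filter_upwards with v
        exact ((hfc.comp (continuous_id.add continuous_const)).sub hfc).div_const _
    exact continuous_const.mul hcont
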